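/- Let n, m be natural numbers and work in Euclidean space ℝⁿ with its standard inner product ⟨·,·⟩ and norm. Let h : ℝⁿ → ℝ be continuously differentiable with gradient ∇h, and let α : ℝ → ℝ be locally Lipschitz, strictly increasing, with α(0) = 0. Let x, x̂ : ℝ → ℝⁿ with x differentiable on [0, ∞), let u : ℝ → ℝᵐ, and suppose for each t ≥ 0 there are f(t) ∈ ℝⁿ and a continuous linear map g(t) : ℝᵐ → ℝⁿ with x'(t) = f(t) + g(t)(u(t)). Let F̂ : ℝⁿ × ℝ_{≥0} → ℝⁿ, Ĝ(z,t) : ℝᵐ → ℝⁿ (continuous linear for each (z,t)), and Δ_F, Δ_G : ℝⁿ × ℝ_{≥0} → ℝ_{≥0}, and define B₁(z,t) := ⟨∇h(z), F̂(z,t)⟩ + α(h(z)) − ‖∇h(z)‖Δ_F(z,t), B₂(z,t) := the adjoint of Ĝ(z,t) applied to ∇h(z), and B₃(z,t) := −‖∇h(z)‖Δ_G(z,t). Suppose for all t ≥ 0: (i) ‖F̂(x(t),t) − f(t)‖ ≤ Δ_F(x(t),t) and the operator norm of Ĝ(x(t),t) − g(t) is at most Δ_G(x(t),t); (ii) ‖x̂(t)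 − x(t)‖ ≤ δ_X(t) for some δ_X(t) ≥ 0; (iii) there is a set S_t containing both x(t) and x̂(t) on which z ↦ B₁(z,t), z ↦ B₂(z,t), and z ↦ B₃(z,t) are Lipschitz with constants L₁(t), L₂(t), L₃(t) ≥ 0, respectively; and (iv) B₁(x̂(t),t) + ⟨B₂(x̂(t),t), u(t)⟩ + B₃(x̂(t),t)‖u(t)‖ ≥ (L₁(t) + L₂(t)‖u(t)‖ + L₃(t)‖u(t)‖)δ_X(t). If h(x(0)) ≥ 0, then h(x(t)) ≥ 0 for all t ≥ 0. -/

import Mathlib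

open scoped RealInnerProductSpace

/-- Invariance claim of Theorem 1 along a trajectory: the zero-superlevel set of
the barrier function `h` is forward invariant under the robust output control
barrier function condition evaluated at the state estimate `x̂`. -/
theorem stmt_9 {n m : ℕ}
    (h : EuclideanSpace ℝ (Fin n) → ℝ) (hh : ContDiff ℝ 1 h)
    (α : ℝ → ℝ) (hα : LocallyLipschitz α) (hmono : StrictMono α) (hα0 : α 0 = 0)
    (x xhat : ℝ → EuclideanSpace ℝ (Fin n)) (u : ℝ → EuclideanSpace ℝ (Fin m))
    (f : ℝ → EuclideanSpace ℝ (Fin n))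
    (g : ℝ → EuclideanSpace ℝ (Fin m) →L[ℝ] EuclideanSpace ℝ (Fin n))
    (hdyn : ∀ t ≥ (0 : ℝ), HasDerivWithinAt x (f t + g t (u t)) (Set.Ici 0) t)
    (Fhat : EuclideanSpace ℝ (Fin n) → ℝ → EuclideanSpace ℝ (Fin n))
    (Ghat : EuclideanSpace ℝ (Fin n) → ℝ →
      (EuclideanSpace ℝ (Fin m) →L[ℝ] EuclideanSpace ℝ (Fin n)))
    (ΔF ΔG : EuclideanSpace ℝ (Fin n) → ℝ → ℝ)
    (hΔF : ∀ z, ∀ t ≥ (0 : ℝ), 0 ≤ ΔF z t) (hΔG : ∀ z, ∀ t ≥ (0 : ℝ), 0 ≤ ΔG z t)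
    -- the components of the robust barrier constraint
    (B₁ : EuclideanSpace ℝ (Fin n) → ℝ → ℝ)
    (B₂ : EuclideanSpace ℝ (Fin n) → ℝ → EuclideanSpace ℝ (Fin m))
    (B₃ : EuclideanSpace ℝ (Fin n) → ℝ → ℝ)
    (hB₁ : ∀ z t, B₁ z t = ⟪gradient h z, Fhat z t⟫ + α (h z) - ‖gradient h z‖ * ΔF z t)
    (hB₂ : ∀ z t, B₂ z t = ContinuousLinearMap.adjoint (Ghat z t) (gradient h z))
    (hB₃ : ∀ z t, B₃ z t = -(‖gradient h z‖ * ΔG z t))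
    -- (i) model error bounds along the trajectory
    (herrF : ∀ t ≥ (0 : ℝ), ‖Fhat (x t) t - f t‖ ≤ ΔF (x t) t)
    (herrG : ∀ t ≥ (0 : ℝ), ‖Ghat (x t) t - g t‖ ≤ ΔG (x t) t)
    -- (ii) state-estimation error bound
    (δX : ℝ → ℝ) (hδX : ∀ t ≥ (0 : ℝ), 0 ≤ δX t)
    (hest : ∀ t ≥ (0 : ℝ), ‖xhat t - x t‖ ≤ δX t)
    -- (iii) local Lipschitz bounds on a set containing both the state and its estimate
    (S : ℝ → Set (EuclideanSpace ℝ (Fin n)))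
    (hxS : ∀ t ≥ (0 : ℝ), x t ∈ S t) (hxhatS : ∀ t ≥ (0 : ℝ), xhat t ∈ S t)
    (L₁ L₂ L₃ : ℝ → ℝ)
    (hL₁ : ∀ t ≥ (0 : ℝ), 0 ≤ L₁ t) (hL₂ : ∀ t ≥ (0 : ℝ), 0 ≤ L₂ t)
    (hL₃ : ∀ t ≥ (0 : ℝ), 0 ≤ L₃ t)
    (hLip₁ : ∀ t ≥ (0 : ℝ), ∀ a ∈ S t, ∀ b ∈ S t, |B₁ a t - B₁ b t| ≤ L₁ t * ‖a - b‖)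
    (hLip₂ : ∀ t ≥ (0 : ℝ), ∀ a ∈ S t, ∀ b ∈ S t, ‖B₂ a t - B₂ b t‖ ≤ L₂ t * ‖a - b‖)
    (hLip₃ : ∀ t ≥ (0 : ℝ), ∀ a ∈ S t, ∀ b ∈ S t, |B₃ a t - B₃ b t| ≤ L₃ t * ‖a - b‖)
    -- (iv) the robust output control barrier condition at the estimate
    (hrobust : ∀ t ≥ (0 : ℝ),
      (L₁ t + L₂ t * ‖u t‖ + L₃ t * ‖u t‖) * δX t ≤
        B₁ (xhat t) t + ⟪B₂ (xhat t) t, u t⟫ + B₃ (xhat t) t * ‖u t‖)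
    (h0 : 0 ≤ h (x 0)) :
    ∀ t ≥ (0 : ℝ), 0 ≤ h (x t) := by

  -- abbreviation
  set w : ℝ → ℝ := fun t => h (x t) with hw
  -- derivative of w along the trajectory
  have hderiv : ∀ t ≥ (0:ℝ), HasDerivWithinAt w
      (⟪gradient h (x t), f t + g t (u t)⟫) (Set.Ici 0) t := by
    intro t ht
    have hg : HasGradientAt h (gradient h (x t)) (x t) :=
      (hh.differentiable one_ne_zero (x t)).hasGradientAt
    have hf' : HasFDerivAt h ((InnerProductSpace.toDual ℝ _) (gradient h (x t))) (x t) :=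
      hg.hasFDerivAt
    have := hf'.comp_hasDerivWithinAt t (hdyn t ht)
    simp only [InnerProductSpace.toDual_apply_apply] at this
    exact this
  -- key pointwise inequality on the derivative
  have hkey : ∀ t ≥ (0:ℝ), -(α (w t)) ≤ ⟪gradient h (x t), f t + g t (u t)⟫ := by
    intro t ht
    set z := x t with hz
    set G := gradient h z with hG
    -- transfer the robust condition from the estimate to the true state
    have hBx : 0 ≤ B₁ z t + ⟪B₂ z t, u t⟫ + B₃ z t * ‖u t‖ := by
      have h1 := hLip₁ t ht z (hxS t ht) (xhat t) (hxhatS t ht)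
      have h2 := hLip₂ t ht z (hxS t ht) (xhat t) (hxhatS t ht)
      have h3 := hLip₃ t ht z (hxS t ht) (xhat t) (hxhatS t ht)
      have he : ‖z - xhat t‖ ≤ δX t := by
        rw [show z - xhat t = -(xhat t - x t) by rw [hz]; abel, norm_neg]
        exact hest t ht
      have hL1 := hL₁ t ht
      have hL2 := hL₂ t ht
      have hL3 := hL₃ t ht
      have h1' : B₁ (xhat t) t - L₁ t * δX t ≤ B₁ z t := by
        have := (abs_le.mp h1).1
        nlinarith [mul_le_mul_of_nonneg_left he hL1]
      have h3' : B₃ (xhat t) t * ‖u t‖ - L₃ t * ‖u t‖ * δX t ≤ B₃ z t * ‖u t‖ := by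
        have := (abs_le.mp h3).1
        have hu : (0:ℝ) ≤ ‖u t‖ := norm_nonneg _
        nlinarith [mul_le_mul_of_nonneg_left he hL3]
      have h2' : ⟪B₂ (xhat t) t, u t⟫ - L₂ t * ‖u t‖ * δX t ≤ ⟪B₂ z t, u t⟫ := by
        have hcs : |⟪B₂ z t - B₂ (xhat t) t, u t⟫| ≤ ‖B₂ z t - B₂ (xhat t) t‖ * ‖u t‖ :=
          abs_real_inner_le_norm _ _
        have hsub : ⟪B₂ z t - B₂ (xhat t) t, u t⟫ = ⟪B₂ z t, u t⟫ - ⟪B₂ (xhat t) t, u t⟫ :=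
          inner_sub_left _ _ _
        have hb : ‖B₂ z t - B₂ (xhat t) t‖ * ‖u t‖ ≤ L₂ t * δX t * ‖u t‖ := by
          have := le_trans h2 (mul_le_mul_of_nonneg_left he hL2)
          exact mul_le_mul_of_nonneg_right this (norm_nonneg _)
        have := (abs_le.mp hcs).1
        nlinarith
      have := hrobust t ht
      have hδ := hδX t ht
      nlinarith
    -- bound the true derivative from below by the barrier expression
    have hFb : ⟪G, Fhat z t⟫ - ‖G‖ * ΔF z t ≤ ⟪G, f t⟫ := by
      have hcs : |⟪G, Fhat z t - f t⟫| ≤ ‖G‖ * ‖Fhat z t - f t‖ :=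
        abs_real_inner_le_norm _ _
      have hsub : ⟪G, Fhat z t - f t⟫ = ⟪G, Fhat z t⟫ - ⟪G, f t⟫ := inner_sub_right _ _ _
      have hF := herrF t ht
      have h2 := (abs_le.mp hcs).2
      nlinarith [mul_le_mul_of_nonneg_left hF (norm_nonneg G)]
    have hGb : ⟪B₂ z t, u t⟫ - ‖G‖ * ΔG z t * ‖u t‖ ≤ ⟪G, g t (u t)⟫ := by
      have hadj : ⟪B₂ z t, u t⟫ = ⟪G, Ghat z t (u t)⟫ := by
        rw [hB₂]; exact ContinuousLinearMap.adjoint_inner_left _ _ _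
      have hcs : |⟪G, Ghat z t (u t) - g t (u t)⟫| ≤ ‖G‖ * ‖Ghat z t (u t) - g t (u t)‖ :=
        abs_real_inner_le_norm _ _
      have hsub : ⟪G, Ghat z t (u t) - g t (u t)⟫ = ⟪G, Ghat z t (u t)⟫ - ⟪G, g t (u t)⟫ :=
        inner_sub_right _ _ _
      have hop : ‖Ghat z t (u t) - g t (u t)‖ ≤ ΔG z t * ‖u t‖ := by
        have : ‖(Ghat z t - g t) (u t)‖ ≤ ‖Ghat z t - g t‖ * ‖u t‖ :=
          ContinuousLinearMap.le_opNorm _ _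
        simp only [ContinuousLinearMap.sub_apply] at this
        exact this.trans (mul_le_mul_of_nonneg_right (herrG t ht) (norm_nonneg _))
      have := (abs_le.mp hcs).2
      nlinarith [mul_le_mul_of_nonneg_left hop (norm_nonneg G)]
    have hinner : ⟪G, f t + g t (u t)⟫ = ⟪G, f t⟫ + ⟪G, g t (u t)⟫ := inner_add_right _ _ _
    have hB1 := hB₁ z t
    have hB3 := hB₃ z t
    rw [← hG] at hB1 hB3
    have hB3' : B₃ z t * ‖u t‖ = -(‖G‖ * ΔG z t * ‖u t‖) := by rw [hB3]; ring
    have hwz : w t = h z := rfl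
    rw [hwz]
    linarith
  -- now the invariance argument by contradiction
  intro t₁ ht₁
  by_contra hneg
  push_neg at hneg
  have hcont : ContinuousOn w (Set.Ici 0) := fun t ht =>
    ((hderiv t ht).continuousWithinAt)
  -- the last time in [0, t₁] where w is nonnegative
  set K : Set ℝ := {t | t ∈ Set.Icc 0 t₁ ∧ 0 ≤ w t} with hK
  have hKne : K.Nonempty := ⟨0, ⟨le_refl 0, ht₁⟩, h0⟩
  have hKbdd : BddAbove K := ⟨t₁, fun t htK => htK.1.2⟩
  have hKsub : K ⊆ Set.Icc 0 t₁ := fun t htK => htK.1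
  have hKclosed : IsClosed K := by
    have hcont' : ContinuousOn w (Set.Icc 0 t₁) :=
      hcont.mono (fun t ht => ht.1)
    have hKeq : K = Set.Icc 0 t₁ ∩ w ⁻¹' Set.Ici 0 := rfl
    rw [hKeq]
    exact ContinuousOn.preimage_isClosed_of_isClosed hcont' isClosed_Icc isClosed_Ici
  set t₀ := sSup K with ht₀
  have ht₀K : t₀ ∈ K := hKclosed.csSup_mem hKne hKbdd
  have ht₀0 : 0 ≤ t₀ := ht₀K.1.1
  have ht₀1 : t₀ ≤ t₁ := ht₀K.1.2
  have hwt₀ : 0 ≤ w t₀ := ht₀K.2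
  have ht₀lt : t₀ < t₁ := by
    rcases lt_or_eq_of_le ht₀1 with h' | h'
    · exact h'
    · exfalso; rw [h'] at hwt₀; exact absurd hneg (not_lt.mpr hwt₀)
  have hwneg : ∀ t ∈ Set.Ioc t₀ t₁, w t < 0 := by
    intro t ht
    by_contra hge
    push_neg at hge
    have : t ∈ K := ⟨⟨le_trans ht₀0 ht.1.le, ht.2⟩, hge⟩
    exact absurd (le_csSup hKbdd this) (not_le.mpr ht.1)
  -- w is strictly increasing on [t₀, t₁]
  have hsm : StrictMonoOn w (Set.Icc t₀ t₁) := by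
    apply strictMonoOn_of_deriv_pos (convex_Icc t₀ t₁)
    · exact hcont.mono (fun t ht => le_trans ht₀0 ht.1)
    · intro t ht
      rw [interior_Icc] at ht
      have ht0 : (0:ℝ) < t := lt_of_le_of_lt ht₀0 ht.1
      have hda : HasDerivAt w (⟪gradient h (x t), f t + g t (u t)⟫) t :=
        (hderiv t ht0.le).hasDerivAt (Ici_mem_nhds ht0)
      rw [hda.deriv]
      have hwt : w t < 0 := hwneg t ⟨ht.1, ht.2.le⟩
      have hαneg : α (w t) < 0 := by
        have := hmono hwt
        rwa [hα0] at this
      have := hkey t ht0.le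
      linarith
  have := hsm ⟨le_refl t₀, ht₀1⟩ ⟨ht₀1, le_refl t₁⟩ ht₀lt
  linarith
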